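/- (Transfer lemma) Let G be a finite graph with distinguished vertices v₁,...,vₙ and let G′ be the 1-factor addition of G, obtained by attaching a new pendant vertex wᵢ with edge {vᵢ, wᵢ} for each i, with the wᵢ as the new distinguished vertices. Then for every ε ∈ {0,1}^n, the number of perfect matchings of G minus the vertices {vᵢ : εᵢ = 1} equals the number of perfect matchings of G′ minus the vertices {wᵢ : εᵢ = 0}. -/

import Mathlib

open SimpleGraph

/-- The number of perfect matchings of a graph. -/
noncomputable def numPM {V : Type*} (G : SimpleGraph V) : ℕ :=
  Nat.card {M : Subgraph G // M.IsPerfectMatching}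

/-- The number of perfect matchings of the subgraph of `G` obtained by deleting the
`i`-th distinguished vertex exactly when `ε i = 1` (`true`). -/
noncomputable def numPMdel {V : Type*} {k : ℕ} (G : SimpleGraph V) (x : Fin k → V)
    (ε : Fin k → Bool) : ℕ :=
  numPM (G.induce {v | ∀ i, ε i = true → v ≠ x i})

/-- The `1`-factor addition of `G` along the distinguished vertices `v i`: attach a new
pendant vertex `w i` (encoded `Sum.inr i`) with edge `{v i, w i}` for each `i`. -/
def oneFactorAddition {V : Type*} {k : ℕ} (G : SimpleGraph V) (v : Fin k → V) :
    SimpleGraph (V ⊕ Fin k) :=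
  SimpleGraph.fromRel (fun a b =>
    (∃ a' b', G.Adj a' b' ∧ a = Sum.inl a' ∧ b = Sum.inl b') ∨
    (∃ i, a = Sum.inl (v i) ∧ b = Sum.inr i))

namespace TransferAux

variable {V : Type*} {k : ℕ}

/-- Remaining vertices on the left. -/
def Sset (v : Fin k → V) (ε : Fin k → Bool) : Set V := {w | ∀ i, ε i = true → w ≠ v i}

/-- Remaining vertices on the right. -/
def Tset (V : Type*) {k : ℕ} (ε : Fin k → Bool) : Set (V ⊕ Fin k) :=
  {u | ∀ i, (!(ε i)) = true → u ≠ Sum.inr i}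

lemma inl_mem_T (ε : Fin k → Bool) (a : V) : Sum.inl a ∈ Tset V ε := by
  intro i _ h; simp at h

lemma inr_mem_T {ε : Fin k → Bool} {i : Fin k} (h : (Sum.inr i : V ⊕ Fin k) ∈ Tset V ε) :
    ε i = true := by
  by_contra hc
  exact h i (by simp [Bool.not_eq_true] at hc ⊢; exact hc) rfl

lemma inr_mem_T' {ε : Fin k → Bool} {i : Fin k} (h : ε i = true) :
    (Sum.inr i : V ⊕ Fin k) ∈ Tset V ε := by
  intro j hj heq
  obtain rfl : i = j := Sum.inr.inj heq
  simp [h] at hj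

variable {G : SimpleGraph V} {v : Fin k → V}

lemma adj_inl_inl {a b : V} :
    (oneFactorAddition G v).Adj (Sum.inl a) (Sum.inl b) ↔ G.Adj a b := by
  constructor
  · rintro ⟨hne, (⟨a', b', hab, h1, h2⟩ | ⟨i, h1, h2⟩) | (⟨a', b', hab, h1, h2⟩ | ⟨i, h1, h2⟩)⟩
    · cases h1; cases h2; exact hab
    · simp at h2
    · cases h1; cases h2; exact hab.symm
    · simp at h2
  · intro h
    exact ⟨by simpa using h.ne, Or.inl (Or.inl ⟨a, b, h, rfl, rfl⟩)⟩

lemma adj_of_inr {i : Fin k} {u : V ⊕ Fin k} (h : (oneFactorAddition G v).Adj (Sum.inr i) u) :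
    u = Sum.inl (v i) := by
  obtain ⟨hne, (⟨a', b', hab, h1, h2⟩ | ⟨j, h1, h2⟩) | (⟨a', b', hab, h1, h2⟩ | ⟨j, h1, h2⟩)⟩ := h
  · simp at h1
  · simp at h1
  · simp at h2
  · obtain rfl : i = j := Sum.inr.inj h2
    exact h1

lemma adj_pendant {i : Fin k} : (oneFactorAddition G v).Adj (Sum.inl (v i)) (Sum.inr i) :=
  ⟨by simp, Or.inl (Or.inr ⟨i, rfl, rfl⟩)⟩

lemma induce_adj' {W : Type*} (H : SimpleGraph W) (s : Set W) (x y : s) :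
    (H.induce s).Adj x y ↔ H.Adj x.1 y.1 := by simp

lemma unique_partner {W : Type*} {H : SimpleGraph W} {M : Subgraph H}
    (hM : M.IsPerfectMatching) {x y z : W} (h1 : M.Adj x y) (h2 : M.Adj x z) : y = z := by
  obtain ⟨w, -, hu⟩ := Subgraph.isPerfectMatching_iff.mp hM x
  rw [hu y h1, hu z h2]

variable (G v)

/-- Forward map on matchings. -/
def fwd (ε : Fin k → Bool) (M : Subgraph (G.induce (Sset v ε))) :
    Subgraph ((oneFactorAddition G v).induce (Tset V ε)) where
  verts := Set.univ
  Adj u u' :=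
    (∃ x y, M.Adj x y ∧ u.1 = Sum.inl x.1 ∧ u'.1 = Sum.inl y.1) ∨
    (∃ i, (u.1 = Sum.inl (v i) ∧ u'.1 = Sum.inr i) ∨ (u.1 = Sum.inr i ∧ u'.1 = Sum.inl (v i)))
  adj_sub := by
    rintro u u' (⟨x, y, hxy, h1, h2⟩ | ⟨i, ⟨h1, h2⟩ | ⟨h1, h2⟩⟩)
    · have h := (induce_adj' G (Sset v ε) x y).mp (M.adj_sub hxy)
      rw [induce_adj', h1, h2, adj_inl_inl]
      exact h
    · rw [induce_adj', h1, h2]; exact adj_pendant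
    · rw [induce_adj', h1, h2]; exact adj_pendant.symm
  edge_vert := by intros; trivial
  symm.symm := by
    rintro u u' (⟨x, y, hxy, h1, h2⟩ | ⟨i, h | h⟩)
    · exact Or.inl ⟨y, x, M.adj_symm hxy, h2, h1⟩
    · exact Or.inr ⟨i, Or.inr ⟨h.2, h.1⟩⟩
    · exact Or.inr ⟨i, Or.inl ⟨h.2, h.1⟩⟩

/-- Backward map on matchings. -/
def bwd (ε : Fin k → Bool) (M' : Subgraph ((oneFactorAddition G v).induce (Tset V ε))) :
    Subgraph (G.induce (Sset v ε)) where
  verts := Set.univ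
  Adj x y := M'.Adj ⟨Sum.inl x.1, inl_mem_T ε x.1⟩ ⟨Sum.inl y.1, inl_mem_T ε y.1⟩
  adj_sub := by
    intro x y h
    have h2 := (induce_adj' _ _ _ _).mp (M'.adj_sub h)
    rw [induce_adj']
    exact adj_inl_inl.mp h2
  edge_vert := by intros; trivial
  symm.symm := fun x y h => M'.adj_symm h

variable {G v}

lemma pendant_match {ε : Fin k → Bool}
    {M' : Subgraph ((oneFactorAddition G v).induce (Tset V ε))}
    (hM' : M'.IsPerfectMatching) {i : Fin k} (hi : ε i = true) :
    M'.Adj ⟨Sum.inr i, inr_mem_T' hi⟩ ⟨Sum.inl (v i), inl_mem_T ε (v i)⟩ := by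
  obtain ⟨w, hw, -⟩ := Subgraph.isPerfectMatching_iff.mp hM' ⟨Sum.inr i, inr_mem_T' hi⟩
  have h := adj_of_inr ((induce_adj' _ _ _ _).mp (M'.adj_sub hw))
  have hw' : w = ⟨Sum.inl (v i), inl_mem_T ε (v i)⟩ := Subtype.ext h
  rwa [hw'] at hw

lemma fwd_pm (hv : Function.Injective v) {ε : Fin k → Bool}
    {M : Subgraph (G.induce (Sset v ε))}
    (hM : M.IsPerfectMatching) : (fwd G v ε M).IsPerfectMatching := by
  rw [Subgraph.isPerfectMatching_iff]
  rintro ⟨u, hu⟩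
  match u with
  | Sum.inr i =>
    refine ⟨⟨Sum.inl (v i), inl_mem_T ε (v i)⟩, Or.inr ⟨i, Or.inr ⟨rfl, rfl⟩⟩, ?_⟩
    rintro w (⟨x, y, hxy, h1, h2⟩ | ⟨j, ⟨h1, h2⟩ | ⟨h1, h2⟩⟩)
    · simp at h1
    · simp at h1
    · obtain rfl : j = i := by simpa using h1.symm
      exact Subtype.ext h2
  | Sum.inl a =>
    by_cases ha : a ∈ Sset v ε
    · obtain ⟨y, hy, hyu⟩ := Subgraph.isPerfectMatching_iff.mp hM ⟨a, ha⟩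
      refine ⟨⟨Sum.inl y.1, inl_mem_T ε y.1⟩, Or.inl ⟨⟨a, ha⟩, y, hy, rfl, rfl⟩, ?_⟩
      rintro w (⟨x, y', hxy, h1, h2⟩ | ⟨j, ⟨h1, h2⟩ | ⟨h1, h2⟩⟩)
      · obtain rfl : x = ⟨a, ha⟩ := Subtype.ext (by simpa using h1.symm)
        have := hyu y' hxy
        subst this
        exact Subtype.ext h2
      · exfalso
        have hj : ε j = true := inr_mem_T (h2 ▸ w.2)
        exact ha j hj (by simpa using h1)
      · simp at h1
    · have ha' : ∃ i, ε i = true ∧ a = v i := by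
        simp only [Sset, Set.mem_setOf_eq, not_forall] at ha
        obtain ⟨i, hi, hne⟩ := ha
        exact ⟨i, hi, not_not.mp hne⟩
      obtain ⟨i, hi, rfl⟩ := ha'
      refine ⟨⟨Sum.inr i, inr_mem_T' hi⟩, Or.inr ⟨i, Or.inl ⟨rfl, rfl⟩⟩, ?_⟩
      rintro w (⟨x, y, hxy, h1, h2⟩ | ⟨j, ⟨h1, h2⟩ | ⟨h1, h2⟩⟩)
      · exact absurd (by simpa using h1.symm) (x.2 i hi)
      · obtain rfl : i = j := hv (by simpa using h1)
        exact Subtype.ext h2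
      · simp at h1

lemma bwd_pm {ε : Fin k → Bool}
    {M' : Subgraph ((oneFactorAddition G v).induce (Tset V ε))}
    (hM' : M'.IsPerfectMatching) : (bwd G v ε M').IsPerfectMatching := by
  rw [Subgraph.isPerfectMatching_iff]
  rintro ⟨a, ha⟩
  obtain ⟨w, hw, hwu⟩ := Subgraph.isPerfectMatching_iff.mp hM' ⟨Sum.inl a, inl_mem_T ε a⟩
  obtain ⟨b, hb⟩ : ∃ b : V, w.1 = Sum.inl b := by
    match hweq : w.1 with
    | Sum.inl b => exact ⟨b, rfl⟩
    | Sum.inr i =>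
      exfalso
      have hi : ε i = true := inr_mem_T (hweq ▸ w.2)
      have hw' : w = ⟨Sum.inr i, inr_mem_T' hi⟩ := Subtype.ext hweq
      rw [hw'] at hw
      have := unique_partner hM' (M'.adj_symm hw) (pendant_match hM' hi)
      exact ha i hi (by simpa using (congrArg Subtype.val this))
  have hbS : b ∈ Sset v ε := by
    intro i hi heq
    subst heq
    have hw' : w = ⟨Sum.inl (v i), inl_mem_T ε (v i)⟩ := Subtype.ext hb
    rw [hw'] at hw
    have := unique_partner hM' (M'.adj_symm hw) (pendant_match hM' hi).symm
    simp at this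
  have hwb : w = ⟨Sum.inl b, inl_mem_T ε b⟩ := Subtype.ext hb
  refine ⟨⟨b, hbS⟩, ?_, ?_⟩
  · show M'.Adj ⟨Sum.inl a, inl_mem_T ε a⟩ ⟨Sum.inl b, inl_mem_T ε b⟩
    rw [← hwb]
    exact hw
  rintro ⟨c, hc⟩ hadj
  have := hwu ⟨Sum.inl c, inl_mem_T ε c⟩ hadj
  rw [hwb] at this
  exact Subtype.ext (by simpa using (congrArg Subtype.val this))

end TransferAux

theorem transfer_lemma {V : Type*} [Fintype V] {k : ℕ} (G : SimpleGraph V)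
    (v : Fin k → V) (hv : Function.Injective v) (ε : Fin k → Bool) :
    numPMdel G v ε =
      numPMdel (oneFactorAddition G v) (fun i => Sum.inr i) (fun i => !(ε i)) := by
  unfold numPMdel numPM
  apply Nat.card_congr
  open TransferAux in
  refine
    { toFun := fun M => ⟨fwd G v ε M.1, fwd_pm hv M.2⟩
      invFun := fun M' => ⟨bwd G v ε M'.1, bwd_pm M'.2⟩
      left_inv := ?_
      right_inv := ?_ }
  · rintro ⟨M, hM⟩
    apply Subtype.ext
    apply SimpleGraph.Subgraph.ext
    · exact Set.eq_univ_of_forall hM.2 |>.symm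
    · ext x y
      show (fwd G v ε M).Adj _ _ ↔ M.Adj x y
      constructor
      · rintro (⟨x', y', hxy, h1, h2⟩ | ⟨i, ⟨h1, h2⟩ | ⟨h1, h2⟩⟩)
        · obtain rfl : x' = x := Subtype.ext (by simpa using h1.symm)
          obtain rfl : y' = y := Subtype.ext (by simpa using h2.symm)
          exact hxy
        · simp at h2
        · simp at h1
      · intro h
        exact Or.inl ⟨x, y, h, rfl, rfl⟩
  · rintro ⟨M', hM'⟩
    apply Subtype.ext
    apply SimpleGraph.Subgraph.ext
    · exact Set.eq_univ_of_forall hM'.2 |>.symm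
    · ext u u'
      show (fwd G v ε (bwd G v ε M')).Adj u u' ↔ M'.Adj u u'
      constructor
      · rintro (⟨x, y, hxy, h1, h2⟩ | ⟨i, ⟨h1, h2⟩ | ⟨h1, h2⟩⟩)
        · have hu : u = ⟨Sum.inl x.1, inl_mem_T ε x.1⟩ := Subtype.ext h1
          have hu' : u' = ⟨Sum.inl y.1, inl_mem_T ε y.1⟩ := Subtype.ext h2
          rw [hu, hu']
          exact hxy
        · have hi : ε i = true := inr_mem_T (h2 ▸ u'.2)
          have hu : u = ⟨Sum.inl (v i), inl_mem_T ε (v i)⟩ := Subtype.ext h1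
          have hu' : u' = ⟨Sum.inr i, inr_mem_T' hi⟩ := Subtype.ext h2
          rw [hu, hu']
          exact (pendant_match hM' hi).symm
        · have hi : ε i = true := inr_mem_T (h1 ▸ u.2)
          have hu : u = ⟨Sum.inr i, inr_mem_T' hi⟩ := Subtype.ext h1
          have hu' : u' = ⟨Sum.inl (v i), inl_mem_T ε (v i)⟩ := Subtype.ext h2
          rw [hu, hu']
          exact pendant_match hM' hi
      · intro h
        have key : ∀ w w' : (Tset V ε), M'.Adj w w' → ∀ i : Fin k, w.1 = Sum.inr i →
            w'.1 = Sum.inl (v i) := by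
          intro w w' hadj i h1
          have hi : ε i = true := inr_mem_T (h1 ▸ w.2)
          have hw : w = ⟨Sum.inr i, inr_mem_T' hi⟩ := Subtype.ext h1
          have := unique_partner hM' (hw ▸ hadj) (pendant_match hM' hi)
          rw [this]
        match h1 : u.1, h2 : u'.1 with
        | Sum.inl a, Sum.inl b =>
          have haS : a ∈ Sset v ε := by
            intro i hi heq
            subst heq
            have hu : u = ⟨Sum.inl (v i), inl_mem_T ε (v i)⟩ := Subtype.ext h1
            have := unique_partner hM' (hu ▸ h) (pendant_match hM' hi).symm
            rw [this] at h2
            simp at h2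
          have hbS : b ∈ Sset v ε := by
            intro i hi heq
            subst heq
            have hu' : u' = ⟨Sum.inl (v i), inl_mem_T ε (v i)⟩ := Subtype.ext h2
            have := unique_partner hM' (hu' ▸ M'.adj_symm h) (pendant_match hM' hi).symm
            rw [this] at h1
            simp at h1
          refine Or.inl ⟨⟨a, haS⟩, ⟨b, hbS⟩, ?_, h1, h2⟩
          have hu : u = ⟨Sum.inl a, inl_mem_T ε a⟩ := Subtype.ext h1
          have hu' : u' = ⟨Sum.inl b, inl_mem_T ε b⟩ := Subtype.ext h2
          show M'.Adj ⟨Sum.inl a, inl_mem_T ε a⟩ ⟨Sum.inl b, inl_mem_T ε b⟩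
          rw [← hu, ← hu']
          exact h
        | Sum.inl a, Sum.inr i =>
          exact Or.inr ⟨i, Or.inl ⟨key u' u (M'.adj_symm h) i h2, h2⟩⟩
        | Sum.inr i, Sum.inl a =>
          exact Or.inr ⟨i, Or.inr ⟨h1, key u u' h i h1⟩⟩
        | Sum.inr i, Sum.inr j =>
          exfalso
          have := adj_of_inr (h1 ▸ (induce_adj' _ _ _ _).mp (M'.adj_sub h))
          rw [h2] at this
          simp at this
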